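/- For all σ, σ^{(0)} ∈ ℝ^n_+ and all t ∈ [0,1], the matrix (1−t)·𝓕(σ^{(0)}) + t·𝓕(σ) − 𝓕((1−t)σ^{(0)} + tσ) is positive semidefinite, i.e., 𝓕 is convex along segments with respect to the Loewner order. -/

import Mathlib

open scoped BigOperators

/-- For all `σ, σ⁽⁰⁾ ∈ ℝ^n_+` and all `t ∈ [0,1]`, the matrix
`(1−t)·𝓕(σ⁽⁰⁾) + t·𝓕(σ) − 𝓕((1−t)σ⁽⁰⁾ + tσ)` is positive semidefinite, i.e.,
`𝓕` is convex along segments with respect to the Loewner order. -/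
theorem stmt_13
    {H : Type*} [NormedAddCommGroup H] [InnerProductSpace ℝ H] [CompleteSpace H]
    {n m : ℕ}
    (b0 : H →L[ℝ] H →L[ℝ] ℝ) (b : Fin n → H →L[ℝ] H →L[ℝ] ℝ)
    (hb0symm : ∀ u v : H, b0 u v = b0 v u)
    (hb0pos : ∀ v : H, 0 ≤ b0 v v)
    (hbsymm : ∀ i, ∀ u v : H, b i u v = b i v u)
    (hbpos : ∀ i, ∀ v : H, 0 ≤ b i v v)
    (C β : ℝ) (hβ : 0 < β) (hCβ : β ≤ C)
    (hcoer : ∀ v : H, β * ‖v‖ ^ 2 ≤ b0 v v + ∑ i, b i v v)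
    (hbound : ∀ v : H, b0 v v + ∑ i, b i v v ≤ C * ‖v‖ ^ 2)
    (u : (Fin n → ℝ) → (H →L[ℝ] ℝ) → H)
    (hu : ∀ σ : Fin n → ℝ, (∀ i, 0 < σ i) → ∀ l : H →L[ℝ] ℝ,
      ∀ v : H, b0 (u σ l) v + ∑ i, σ i * b i (u σ l) v = l v)
    (l : Fin m → (H →L[ℝ] ℝ)) :
    ∀ σ σ₀ : Fin n → ℝ, (∀ i, 0 < σ i) → (∀ i, 0 < σ₀ i) →
      ∀ t ∈ Set.Icc (0 : ℝ) 1,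
        Matrix.PosSemidef
          (Matrix.of fun j k : Fin m =>
            (1 - t) * l k (u σ₀ (l j)) + t * l k (u σ (l j)) -
              l k (u ((1 - t) • σ₀ + t • σ) (l j))) := by
  intro σ σ₀ hσ hσ₀ t ht
  obtain ⟨ht0, ht1⟩ := ht
  set τ : Fin n → ℝ := (1 - t) • σ₀ + t • σ with hτdef
  have hτpos : ∀ i, 0 < τ i := by
    intro i
    simp only [hτdef, Pi.add_apply, Pi.smul_apply, smul_eq_mul]
    rcases ht0.lt_or_eq with h | h
    · nlinarith [mul_pos h (hσ i), mul_nonneg (sub_nonneg.2 ht1) (hσ₀ i).le]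
    · simp [← h, hσ₀ i]
  -- the bilinear form at parameter σ'
  set B : (Fin n → ℝ) → H → H → ℝ :=
    fun σ' a c => b0 a c + ∑ i, σ' i * b i a c with hBdef
  have hBsymm : ∀ σ' a c, B σ' a c = B σ' c a := by
    intro σ' a c
    simp only [hBdef]
    rw [hb0symm]
    congr 1
    exact Finset.sum_congr rfl fun i _ => by rw [hbsymm]
  have hBpos : ∀ (σ' : Fin n → ℝ), (∀ i, 0 < σ' i) → ∀ a, 0 ≤ B σ' a a := by
    intro σ' hσ' a
    exact add_nonneg (hb0pos a)
      (Finset.sum_nonneg fun i _ => mul_nonneg (hσ' i).le (hbpos i a))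
  have hBexp : ∀ σ' (a c : H),
      B σ' (a - c) (a - c) = B σ' a a - B σ' a c - B σ' c a + B σ' c c := by
    intro σ' a c
    simp only [hBdef, map_sub, ContinuousLinearMap.sub_apply, mul_sub,
      Finset.sum_sub_distrib]
    ring
  -- symmetry of each F(σ')
  have key_symm : ∀ (σ' : Fin n → ℝ), (∀ i, 0 < σ' i) → ∀ j k : Fin m,
      l k (u σ' (l j)) = l j (u σ' (l k)) := by
    intro σ' hσ' j k
    have h1 := hu σ' hσ' (l j) (u σ' (l k))
    have h2 := hu σ' hσ' (l k) (u σ' (l j))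
    rw [← h1, ← h2]
    exact (hBsymm σ' (u σ' (l k)) (u σ' (l j)))
  rw [Matrix.posSemidef_iff_dotProduct_mulVec]
  constructor
  · -- IsHermitian
    ext j k
    simp only [Matrix.conjTranspose_apply, Matrix.of_apply, star_trivial]
    rw [key_symm σ₀ hσ₀ k j, key_symm σ hσ k j, key_symm τ hτpos k j]
  · intro x
    -- combined functional and solution
    set Lg : H → ℝ := fun v => ∑ j, x j * l j v with hLgdef
    set W : (Fin n → ℝ) → H := fun σ' => ∑ j, x j • u σ' (l j) with hWdef
    have hW : ∀ (σ' : Fin n → ℝ), (∀ i, 0 < σ' i) → ∀ v, B σ' (W σ') v = Lg v := by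
      intro σ' hσ' v
      simp only [hBdef, hWdef, hLgdef, map_sum, map_smul,
        ContinuousLinearMap.sum_apply, ContinuousLinearMap.smul_apply,
        smul_eq_mul, Finset.mul_sum]
      rw [Finset.sum_comm (s := Finset.univ) (t := Finset.univ)
        (f := fun i j => σ' i * (x j * b i (u σ' (l j)) v))]
      rw [← Finset.sum_add_distrib]
      refine Finset.sum_congr rfl fun j _ => ?_
      have := hu σ' hσ' (l j) v
      calc x j * b0 (u σ' (l j)) v + ∑ i, σ' i * (x j * b i (u σ' (l j)) v)
          = x j * (b0 (u σ' (l j)) v + ∑ i, σ' i * b i (u σ' (l j)) v) := by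
            rw [mul_add, Finset.mul_sum]
            congr 1
            exact Finset.sum_congr rfl fun i _ => by ring
        _ = x j * l j v := by rw [this]
    -- quadratic form equals Lg (W σ')
    have hQ : ∀ (σ' : Fin n → ℝ),
        ∑ j, ∑ k, x j * ((l k) (u σ' (l j)) * x k) = Lg (W σ') := by
      intro σ'
      simp only [hLgdef, hWdef, map_sum, map_smul, smul_eq_mul, Finset.mul_sum]
      rw [Finset.sum_comm]
      exact Finset.sum_congr rfl fun j _ => Finset.sum_congr rfl fun k _ => by ring
    -- key inequality at parameter σ' with test vector v
    have hkey : ∀ (σ' : Fin n → ℝ), (∀ i, 0 < σ' i) → ∀ v : H,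
        0 ≤ Lg (W σ') - 2 * Lg v + B σ' v v := by
      intro σ' hσ' v
      have h := hBpos σ' hσ' (W σ' - v)
      rw [hBexp σ' (W σ') v] at h
      rw [hBsymm σ' v (W σ')] at h
      rw [hW σ' hσ' (W σ'), hW σ' hσ' v] at h
      linarith
    have hv := hW τ hτpos (W τ)
    have haff : ∀ a : H, B τ a a = (1 - t) * B σ₀ a a + t * B σ a a := by
      intro a
      have hsum : ∑ i, τ i * b i a a
          = (1 - t) * ∑ i, σ₀ i * b i a a + t * ∑ i, σ i * b i a a := by
        rw [Finset.mul_sum, Finset.mul_sum, ← Finset.sum_add_distrib]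
        refine Finset.sum_congr rfl fun i _ => ?_
        simp only [hτdef, Pi.add_apply, Pi.smul_apply, smul_eq_mul]
        ring
      simp only [hBdef]
      rw [hsum]
      ring
    have h0 := hkey σ₀ hσ₀ (W τ)
    have h1 := hkey σ hσ (W τ)
    have hxy : dotProduct (star x) ((Matrix.of fun j k : Fin m =>
            (1 - t) * l k (u σ₀ (l j)) + t * l k (u σ (l j)) -
              l k (u τ (l j))).mulVec x)
        = (1 - t) * Lg (W σ₀) + t * Lg (W σ) - Lg (W τ) := by
      simp only [dotProduct, Matrix.mulVec, Matrix.of_apply, star_trivial,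
        Pi.star_apply]
      rw [← hQ σ₀, ← hQ σ, ← hQ τ]
      simp only [Finset.mul_sum, ← Finset.sum_sub_distrib, ← Finset.sum_add_distrib]
      refine Finset.sum_congr rfl fun j _ => ?_
      exact Finset.sum_congr rfl fun k _ => by ring
    rw [hxy]
    nlinarith [mul_nonneg (sub_nonneg.2 ht1) h0, mul_nonneg ht0 h1, haff (W τ), hv]
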